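/- Consider the parallel Glauber dynamics on a complete interference graph with n links and fugacities λ_1,…,λ_n > 0, where the decision schedule is the singleton {i} with probability c_n/n for each link i, with c_n = (1−1/n)^{n−1}, and is empty with the remaining probability 1−c_n. The state space is {0,1,…,n} (state i ≥ 1 means only link i is active, state 0 means no link is active) and the stationary distribution is π(i) = λ_i/Z for i ≥ 1 and π(0) = 1/Z with Z = 1 + Σ_{j=1}^n λ_j. Then for every initial state x' and every t ≥ 0, ||μ_{x',t} − π||_var ≤ γ^t, where γ = 1 − c_min/(n(1+λ_max)), λ_max = max_i λ_i, and c_min = 0.2 (which satisfies c_n ≥ c_min for all n ≥ 1). -/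

import Mathlib

open Finset

/-- Distribution at time `t` of a Markov chain with transition matrix `P`
started at state `x`. -/
noncomputable def chainDist {S : Type*} [Fintype S] [DecidableEq S]
    (P : S → S → ℝ) (x : S) : ℕ → S → ℝ
  | 0 => fun s => if s = x then 1 else 0
  | t + 1 => fun s => ∑ s' : S, chainDist P x t s' * P s' s

/-- Total variation distance between two distributions on a finite set. -/
noncomputable def tvDist {S : Type*} [Fintype S] (μ ν : S → ℝ) : ℝ :=
  (1 / 2) * ∑ s : S, |μ s - ν s|

/-- Mixing time: the maximum over starting states in `states` of the first time
the distribution is within `1/e` of `π` in total variation. -/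
noncomputable def mixTime {S : Type*} [Fintype S] [DecidableEq S]
    (P : S → S → ℝ) (π : S → ℝ) (states : Finset S) : ℕ :=
  states.sup fun x => sInf {t : ℕ | tvDist (chainDist P x t) π ≤ 1 / Real.exp 1}

/-- `c_n = (1 - 1/n)^(n-1)`: the probability that a given link is alone in the
decision schedule when every link sends an INTENT message with probability `1/n`. -/
noncomputable def cSel (n : ℕ) : ℝ := (1 - 1 / (n : ℝ)) ^ (n - 1)

/-- The transition matrix of the parallel Glauber dynamics on a complete
interference graph with `n` links: the state `none` means no link is active and
`some i` means only link `i` is active; each singleton decision schedule `{i}`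
is chosen with probability `c_n/n` and the empty decision schedule otherwise. -/
noncomputable def completeP (n : ℕ) (lam : Fin n → ℝ) :
    Option (Fin n) → Option (Fin n) → ℝ
  | none, none => 1 - cSel n + (cSel n / n) * ∑ i : Fin n, 1 / (1 + lam i)
  | none, some i => (cSel n / n) * (lam i / (1 + lam i))
  | some i, none => (cSel n / n) * (1 / (1 + lam i))
  | some i, some j => if i = j then 1 - (cSel n / n) * (1 / (1 + lam i)) else 0

/-- The stationary distribution of the complete-graph dynamics:
`π(i) = λ_i/Z`, `π(0) = 1/Z`, `Z = 1 + Σ_j λ_j`. -/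
noncomputable def completePi (n : ℕ) (lam : Fin n → ℝ) : Option (Fin n) → ℝ
  | none => 1 / (1 + ∑ j : Fin n, lam j)
  | some i => lam i / (1 + ∑ j : Fin n, lam j)

/-! ### Auxiliary lemmas -/

lemma cSel_le_one (n : ℕ) (hn : 0 < n) : cSel n ≤ 1 := by
  have h0 : (0:ℝ) < n := by exact_mod_cast hn
  have h1 : 1 / (n:ℝ) ≤ 1 := by rw [div_le_one h0]; exact_mod_cast hn
  have h2 : 0 < 1 / (n:ℝ) := by positivity
  unfold cSel
  apply pow_le_one₀ <;> linarith

lemma cSel_ge (n : ℕ) (hn : 0 < n) : (0.2 : ℝ) ≤ cSel n := by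
  unfold cSel
  rcases Nat.eq_or_lt_of_le hn with h1 | h2
  · simp [← h1]; norm_num
  · set m : ℕ := n - 1 with hm
    have hm1 : 1 ≤ m := by omega
    have hmn : (n : ℝ) = (m : ℝ) + 1 := by
      have : n = m + 1 := by omega
      rw [this]; push_cast; ring
    have hmpos : (0:ℝ) < m := by exact_mod_cast hm1
    have hbase : 1 - 1 / (n:ℝ) = ((1 + 1/(m:ℝ)))⁻¹ := by
      rw [hmn]; field_simp
      ring
    have hexp : ((1:ℝ) + 1/(m:ℝ)) ^ m ≤ Real.exp 1 := by
      have h1 : (1:ℝ) + 1/(m:ℝ) ≤ Real.exp (1/(m:ℝ)) := by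
        have := Real.add_one_le_exp (1/(m:ℝ)); linarith
      calc ((1:ℝ) + 1/(m:ℝ)) ^ m ≤ (Real.exp (1/(m:ℝ))) ^ m := by
            apply pow_le_pow_left₀ (by positivity) h1
        _ = Real.exp ((m:ℝ) * (1/(m:ℝ))) := by rw [← Real.exp_nat_mul]
        _ = Real.exp 1 := by rw [mul_one_div, div_self (ne_of_gt hmpos)]
    have hpos : (0:ℝ) < ((1:ℝ) + 1/(m:ℝ)) ^ m := by positivity
    have h5 : ((1:ℝ) + 1/(m:ℝ)) ^ m ≤ 5 := by
      have := Real.exp_one_lt_d9; linarith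
    rw [hbase, inv_pow]
    calc (0.2:ℝ) = (5:ℝ)⁻¹ := by norm_num
      _ ≤ (((1:ℝ) + 1/(m:ℝ)) ^ m)⁻¹ := inv_anti₀ hpos h5

section Contraction

variable {S : Type*} [Fintype S] [DecidableEq S]

lemma tv_contraction (P : S → S → ℝ) (s₀ : S) (α : ℝ)
    (hP0 : ∀ x y, 0 ≤ P x y) (hrow : ∀ x, ∑ y, P x y = 1) (hmin : ∀ x, α ≤ P x s₀)
    (μ ν : S → ℝ) (hsum : ∑ x, μ x = ∑ x, ν x) :
    tvDist (fun s => ∑ x, μ x * P x s) (fun s => ∑ x, ν x * P x s) ≤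
      (1 - α) * tvDist μ ν := by
  set f : S → ℝ := fun x => μ x - ν x with hf
  have hf0 : ∑ x, f x = 0 := by
    simp only [hf, Finset.sum_sub_distrib, hsum, sub_self]
  set P' : S → S → ℝ := fun x s => P x s - if s = s₀ then α else 0 with hP'
  have hP'0 : ∀ x s, 0 ≤ P' x s := by
    intro x s
    simp only [hP']
    split
    · next h => subst h; have := hmin x; linarith
    · simpa using hP0 x s
  have hP'row : ∀ x, ∑ s, P' x s = 1 - α := by
    intro x
    simp only [hP', Finset.sum_sub_distrib, hrow, Finset.sum_ite_eq' Finset.univ s₀,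
      Finset.mem_univ, if_true]
  have key : ∀ s, (∑ x, μ x * P x s) - (∑ x, ν x * P x s) = ∑ x, f x * P' x s := by
    intro s
    have : ∑ x, f x * P' x s
        = ∑ x, f x * P x s - (∑ x, f x) * (if s = s₀ then α else 0) := by
      rw [Finset.sum_mul, ← Finset.sum_sub_distrib]
      exact Finset.sum_congr rfl fun x _ => by simp [hP', mul_sub]
    rw [this, hf0, zero_mul, sub_zero, ← Finset.sum_sub_distrib]
    exact Finset.sum_congr rfl fun x _ => by simp [hf, sub_mul]
  unfold tvDist
  calc (1/2) * ∑ s, |(∑ x, μ x * P x s) - (∑ x, ν x * P x s)|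
      = (1/2) * ∑ s, |∑ x, f x * P' x s| := by
        congr 1; exact Finset.sum_congr rfl fun s _ => by rw [key s]
    _ ≤ (1/2) * ∑ s, ∑ x, |f x| * P' x s := by
        apply mul_le_mul_of_nonneg_left _ (by norm_num)
        apply Finset.sum_le_sum
        intro s _
        calc |∑ x, f x * P' x s| ≤ ∑ x, |f x * P' x s| := Finset.abs_sum_le_sum_abs _ _
          _ = ∑ x, |f x| * P' x s := Finset.sum_congr rfl fun x _ => by
              rw [abs_mul, abs_of_nonneg (hP'0 x s)]
    _ = (1/2) * ∑ x, |f x| * (1 - α) := by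
        rw [Finset.sum_comm]
        congr 1
        exact Finset.sum_congr rfl fun x _ => by rw [← Finset.mul_sum, hP'row]
    _ = (1 - α) * ((1/2) * ∑ x, |μ x - ν x|) := by
        rw [← Finset.sum_mul]; ring

lemma chainDist_sum (P : S → S → ℝ) (hrow : ∀ x, ∑ y, P x y = 1) (x : S) (t : ℕ) :
    ∑ s, chainDist P x t s = 1 := by
  induction t with
  | zero => simp [chainDist]
  | succ t ih =>
    simp only [chainDist]
    rw [Finset.sum_comm]
    simp only [← Finset.mul_sum, hrow, mul_one]
    exact ih

end Contraction

section Complete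

variable (n : ℕ) (lam : Fin n → ℝ)

lemma comb_sum (hlam : ∀ i, 0 < lam i) :
    ∑ i : Fin n, (1 / (1 + lam i) + lam i / (1 + lam i)) = (n:ℝ) := by
  have h1 : ∀ i : Fin n, 1 / (1 + lam i) + lam i / (1 + lam i) = 1 := by
    intro i
    have : (1:ℝ) + lam i ≠ 0 := ne_of_gt (by have := hlam i; linarith)
    field_simp
  calc ∑ i : Fin n, (1 / (1 + lam i) + lam i / (1 + lam i))
      = ∑ _i : Fin n, (1:ℝ) := Finset.sum_congr rfl fun i _ => h1 i
    _ = (n:ℝ) := by simp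

lemma completeP_nonneg (hn : 0 < n) (hlam : ∀ i, 0 < lam i) (hc0 : 0 ≤ cSel n)
    (hc1 : cSel n ≤ 1) : ∀ x y, 0 ≤ completeP n lam x y := by
  have hnR : (1:ℝ) ≤ n := by exact_mod_cast hn
  have hl1 : ∀ i, (0:ℝ) < 1 + lam i := fun i => by have := hlam i; linarith
  rintro (_ | i) (_ | j) <;> simp only [completeP]
  · have : (0:ℝ) ≤ (cSel n / n) * ∑ i : Fin n, 1 / (1 + lam i) := by
      apply mul_nonneg (by positivity)
      exact Finset.sum_nonneg fun i _ => by have := hl1 i; positivity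
    linarith
  · have := hlam j; have := hl1 j; positivity
  · have := hl1 i; positivity
  · split
    · have h1 : cSel n / n ≤ 1 := by
        rw [div_le_one (by linarith : (0:ℝ) < n)]; linarith
      have h2 : 1 / (1 + lam i) ≤ 1 := by
        rw [div_le_one (hl1 i)]; have := hlam i; linarith
      have h3 : (0:ℝ) ≤ 1 / (1 + lam i) := by have := hl1 i; positivity
      nlinarith
    · exact le_refl 0

lemma completeP_row (hn : 0 < n) (hlam : ∀ i, 0 < lam i) :
    ∀ x, ∑ y, completeP n lam x y = 1 := by
  have hnR : (0:ℝ) < n := by exact_mod_cast hn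
  rintro (_ | i)
  · rw [Fintype.sum_option]
    simp only [completeP]
    have : (cSel n / n) * ∑ i : Fin n, 1 / (1 + lam i)
        + ∑ i : Fin n, (cSel n / n) * (lam i / (1 + lam i)) = cSel n := by
      rw [← Finset.mul_sum, ← mul_add, ← Finset.sum_add_distrib,
        comb_sum n lam hlam]
      field_simp
    linarith
  · rw [Fintype.sum_option]
    simp only [completeP]
    rw [Finset.sum_ite_eq Finset.univ i]
    simp

lemma completePi_sum (hlam : ∀ i, 0 < lam i) :
    ∑ s, completePi n lam s = 1 := by
  have hZ : (0:ℝ) < 1 + ∑ j : Fin n, lam j := by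
    have : 0 ≤ ∑ j : Fin n, lam j := Finset.sum_nonneg fun j _ => (hlam j).le
    linarith
  rw [Fintype.sum_option]
  simp only [completePi]
  rw [← Finset.sum_div]
  field_simp

lemma completePi_nonneg (hlam : ∀ i, 0 < lam i) :
    ∀ s, 0 ≤ completePi n lam s := by
  have hZ : (0:ℝ) < 1 + ∑ j : Fin n, lam j := by
    have : 0 ≤ ∑ j : Fin n, lam j := Finset.sum_nonneg fun j _ => (hlam j).le
    linarith
  rintro (_ | i) <;> simp only [completePi]
  · positivity
  · have := hlam i; positivity

lemma completePi_stationary (hn : 0 < n) (hlam : ∀ i, 0 < lam i) :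
    ∀ s, ∑ s', completePi n lam s' * completeP n lam s' s = completePi n lam s := by
  have hnR : (0:ℝ) < n := by exact_mod_cast hn
  have hl1 : ∀ i : Fin n, (1:ℝ) + lam i ≠ 0 :=
    fun i => ne_of_gt (by have := hlam i; linarith)
  have hZ : (0:ℝ) < 1 + ∑ j : Fin n, lam j := by
    have : 0 ≤ ∑ j : Fin n, lam j := Finset.sum_nonneg fun j _ => (hlam j).le
    linarith
  set Z : ℝ := 1 + ∑ j : Fin n, lam j with hZdef
  have hZ0 : Z ≠ 0 := ne_of_gt hZ
  rintro (_ | j)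
  · rw [Fintype.sum_option]
    simp only [completePi, completeP]
    have e1 : ∑ i : Fin n, lam i / Z * (cSel n / n * (1 / (1 + lam i)))
        = (cSel n / (n * Z)) * ∑ i : Fin n, lam i / (1 + lam i) := by
      rw [Finset.mul_sum]
      refine Finset.sum_congr rfl fun i _ => ?_
      field_simp
    rw [e1]
    have e2 : (1:ℝ) / Z * (1 - cSel n + cSel n / n * ∑ i : Fin n, 1 / (1 + lam i))
        = (1 - cSel n) / Z + (cSel n / (n * Z)) * ∑ i : Fin n, 1 / (1 + lam i) := by
      field_simp
    rw [e2]
    have e3 : (cSel n / (n * Z)) * ∑ i : Fin n, 1 / (1 + lam i)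
        + (cSel n / (n * Z)) * ∑ i : Fin n, lam i / (1 + lam i) = cSel n / Z := by
      rw [← mul_add, ← Finset.sum_add_distrib, comb_sum n lam hlam]
      field_simp
    have e4 : (1 - cSel n) / Z + cSel n / Z = 1 / Z := by
      field_simp
      ring
    linarith
  · rw [Fintype.sum_option]
    simp only [completePi, completeP, mul_ite, mul_zero]
    rw [Finset.sum_ite_eq' Finset.univ j]
    simp only [Finset.mem_univ, if_true]
    have key : 1 / Z * (cSel n / n * (lam j / (1 + lam j)))
        = lam j / Z * (cSel n / n * (1 / (1 + lam j))) := by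
      have h := hl1 j
      field_simp
    rw [key]
    ring

end Complete

/-- Lemma 5 of the paper: on the complete interference graph
with `n ≥ 1` links, the PGD converges geometrically to `π`: for every initial
state and every `t`, `‖μ_{x',t} - π‖_var ≤ γ^t` with
`γ = 1 - c_min/(n(1+λ_max))`, `c_min = 0.2`; moreover `c_n ≥ c_min`. -/
theorem complete_graph_geometric_mixing
    (n : ℕ) (hn : 0 < n)
    (lam : Fin n → ℝ) (hlam : ∀ i, 0 < lam i) :
    (0.2 : ℝ) ≤ cSel n ∧
    ∀ (x' : Option (Fin n)) (t : ℕ),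
      tvDist (chainDist (completeP n lam) x' t) (completePi n lam) ≤
        (1 - 0.2 / ((n : ℝ) *
          (1 + Finset.univ.sup' ⟨⟨0, hn⟩, Finset.mem_univ _⟩ lam))) ^ t := by
  have hc02 := cSel_ge n hn
  have hc1 := cSel_le_one n hn
  have hc0 : (0:ℝ) ≤ cSel n := by linarith
  refine ⟨hc02, ?_⟩
  set M : ℝ := Finset.univ.sup' ⟨⟨0, hn⟩, Finset.mem_univ _⟩ lam with hMdef
  have hnR : (1:ℝ) ≤ n := by exact_mod_cast hn
  have hnpos : (0:ℝ) < n := by linarith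
  have hM : ∀ i, lam i ≤ M := fun i => Finset.le_sup' lam (Finset.mem_univ i)
  have hMpos : 0 < M := lt_of_lt_of_le (hlam ⟨0, hn⟩) (hM ⟨0, hn⟩)
  have h1M : (0:ℝ) < 1 + M := by linarith
  set α : ℝ := 0.2 / ((n : ℝ) * (1 + M)) with hα
  have hαpos : 0 < α := by positivity
  have hα1 : α ≤ 1 := by
    rw [hα, div_le_one (by positivity)]
    nlinarith
  -- minorization
  have hmin : ∀ x, α ≤ completeP n lam x none := by
    rintro (_ | i)
    · simp only [completeP]
      have hs : (n:ℝ) * (1 / (1 + M)) ≤ ∑ i : Fin n, 1 / (1 + lam i) := by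
        calc (n:ℝ) * (1 / (1 + M)) = ∑ _i : Fin n, 1 / (1 + M) := by
              simp [Finset.card_univ, mul_comm]
          _ ≤ ∑ i : Fin n, 1 / (1 + lam i) := by
              apply Finset.sum_le_sum
              intro i _
              apply one_div_le_one_div_of_le
              · have := hlam i; linarith
              · have := hM i; linarith
      have h2 : (cSel n / n) * ((n:ℝ) * (1 / (1 + M))) = cSel n / (1 + M) := by
        field_simp
      have h3 : α ≤ cSel n / (1 + M) := by
        rw [hα]
        apply div_le_div₀ hc0 hc02 h1M
        nlinarith
      have h4 : (cSel n / n) * ((n:ℝ) * (1 / (1 + M)))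
          ≤ (cSel n / n) * ∑ i : Fin n, 1 / (1 + lam i) :=
        mul_le_mul_of_nonneg_left hs (by positivity)
      rw [h2] at h4
      linarith
    · simp only [completeP]
      have he : (cSel n / n) * (1 / (1 + lam i)) = cSel n / ((n:ℝ) * (1 + lam i)) := by
        rw [div_mul_div_comm, mul_one]
      rw [he, hα]
      apply div_le_div₀ hc0 hc02 (by have := hlam i; positivity)
      have := hM i
      nlinarith
  have hP0 := completeP_nonneg n lam hn hlam hc0 hc1
  have hrow := completeP_row n lam hn hlam
  have hstat := completePi_stationary n lam hn hlam
  have hπsum := completePi_sum n lam hlam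
  have hπ0 := completePi_nonneg n lam hlam
  intro x' t
  have hγ : (1 - 0.2 / ((n : ℝ) * (1 + M))) = 1 - α := by rw [hα]
  rw [hγ]
  induction t with
  | zero =>
    -- tvDist (δ_{x'}) π ≤ 1
    simp only [chainDist, pow_zero, tvDist]
    have hb : ∀ s : Option (Fin n),
        |(if s = x' then (1:ℝ) else 0) - completePi n lam s|
          ≤ (if s = x' then (1:ℝ) else 0) + completePi n lam s := by
      intro s
      have h1 : (0:ℝ) ≤ (if s = x' then (1:ℝ) else 0) := by split <;> norm_num
      have h2 := hπ0 s
      rw [abs_sub_le_iff]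
      constructor <;> [skip; skip] <;> nlinarith [abs_nonneg ((if s = x' then (1:ℝ) else 0) - completePi n lam s)]
    calc (1/2 : ℝ) * ∑ s, |(if s = x' then (1:ℝ) else 0) - completePi n lam s|
        ≤ (1/2) * ∑ s, ((if s = x' then (1:ℝ) else 0) + completePi n lam s) := by
          apply mul_le_mul_of_nonneg_left (Finset.sum_le_sum fun s _ => hb s) (by norm_num)
      _ = 1 := by
          rw [Finset.sum_add_distrib, hπsum]
          simp
          norm_num
  | succ t ih =>
    have hchainsum := chainDist_sum (completeP n lam) hrow x' t
    have e : tvDist (chainDist (completeP n lam) x' (t+1)) (completePi n lam)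
        = tvDist (fun s => ∑ x, chainDist (completeP n lam) x' t x * completeP n lam x s)
            (fun s => ∑ x, completePi n lam x * completeP n lam x s) := by
      congr 1
      exact funext fun s => (hstat s).symm
    rw [e]
    calc tvDist (fun s => ∑ x, chainDist (completeP n lam) x' t x * completeP n lam x s)
            (fun s => ∑ x, completePi n lam x * completeP n lam x s)
        ≤ (1 - α) * tvDist (chainDist (completeP n lam) x' t) (completePi n lam) := by
          apply tv_contraction (completeP n lam) none α hP0 hrow hmin
          rw [hchainsum, hπsum]
      _ ≤ (1 - α) * (1 - α) ^ t := by
          apply mul_le_mul_of_nonneg_left ih (by linarith)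
      _ = (1 - α) ^ (t + 1) := by ring
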